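/- Let n ≥ 2 and 1 ≤ k ≤ 2^{n−1}. Then the encoded vertex v^n(k) satisfies 2^{C(n−1,2)} · (k − 1) ≤ v^n(k) < 2^{C(n−1,2)} · k, where C(n−1,2) = (n−1)(n−2)/2; equivalently, k − 1 ≤ v^n(k) / 2^{C(n−1,2)} < k. -/
import Mathlib


/-- Integer encoding of a binary vector (MSB first): code(x) = Σ x_j 2^(m-j). -/
def code (x : List Bool) : ℕ := x.foldl (fun a b => 2 * a + (if b then 1 else 0)) 0

/-- m-bit binary representation (MSB first) of an integer k. -/
def decode (m k : ℕ) : List Bool := (List.range m).map (fun j => k.testBit (m - 1 - j))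

/-- Agreement-indicator map: λ(x) lists 𝟙(x_i = x_j) for pairs i < j in lex order. -/
def lam : List Bool → List Bool
  | [] => []
  | a :: t => (t.map (fun b => a == b)) ++ lam t

/-- Integer-level map λ#_n. -/
def lambdaSharp (n k : ℕ) : ℕ := code (lam (decode n k))

/-- Encoded vertices of 𝟙-CUT(n): v^n(k) = λ#_n(2^(n-1) + k - 1). -/
def v (n k : ℕ) : ℕ := lambdaSharp n (2 ^ (n - 1) + k - 1)

lemma code_foldl (x : List Bool) : ∀ a : ℕ,
    x.foldl (fun a b => 2 * a + (if b then 1 else 0)) a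
      = a * 2 ^ x.length + x.foldl (fun a b => 2 * a + (if b then 1 else 0)) 0 := by
  induction x with
  | nil => intro a; simp
  | cons b t ih =>
    intro a
    rw [List.foldl_cons, List.foldl_cons, ih (2 * a + (if b then 1 else 0)),
      ih (2 * 0 + (if b then 1 else 0)), List.length_cons]
    ring

lemma code_cons (b : Bool) (t : List Bool) :
    code (b :: t) = (if b then 1 else 0) * 2 ^ t.length + code t := by
  unfold code
  rw [List.foldl_cons, code_foldl]
  ring

lemma code_append (x y : List Bool) :
    code (x ++ y) = code x * 2 ^ y.length + code y := by
  unfold code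
  rw [List.foldl_append]
  exact code_foldl y _

lemma code_lt (x : List Bool) : code x < 2 ^ x.length := by
  induction x with
  | nil => simp [code]
  | cons b t ih =>
    rw [code_cons, List.length_cons, pow_succ]
    rcases b with _ | _ <;> simp <;> omega

lemma length_lam (x : List Bool) : (lam x).length = Nat.choose x.length 2 := by
  induction x with
  | nil => simp [lam]
  | cons a t ih =>
    simp [lam, ih, Nat.choose_succ_succ, Nat.choose_one_right]

lemma decode_succ (m j : ℕ) :
    decode (m + 1) j = j.testBit m :: decode m j := by
  unfold decode
  rw [List.range_succ_eq_map, List.map_cons, List.map_map]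
  simp only [Nat.add_sub_cancel, Nat.sub_zero]
  congr 1
  apply List.map_congr_left
  intro i _
  simp only [Function.comp_apply]
  congr 1
  omega

lemma decode_mod (m j : ℕ) : decode m (j % 2 ^ m) = decode m j := by
  unfold decode
  apply List.map_congr_left
  intro i hi
  simp only [List.mem_range] at hi
  rw [Nat.testBit_mod_two_pow]
  have : m - 1 - i < m := by omega
  simp [this]

lemma length_decode (m j : ℕ) : (decode m j).length = m := by simp [decode]

lemma code_decode : ∀ m j : ℕ, j < 2 ^ m → code (decode m j) = j := by
  intro m
  induction m with
  | zero => intro j hj; interval_cases j; simp [decode, code]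
  | succ m ih =>
    intro j hj
    rw [decode_succ, code_cons, length_decode]
    have h2 : code (decode m j) = j % 2 ^ m := by
      rw [← decode_mod]; exact ih _ (Nat.mod_lt _ (by positivity))
    rw [h2]
    have htb : j.testBit m = decide (j / 2 ^ m % 2 = 1) := Nat.testBit_eq_decide_div_mod_eq
    have hdiv : j / 2 ^ m < 2 := by
      apply Nat.div_lt_of_lt_mul
      rw [pow_succ] at hj; omega
    have hmod : j % 2 ^ m + 2 ^ m * (j / 2 ^ m) = j := Nat.mod_add_div j (2 ^ m)
    generalize hg : j / 2 ^ m = d at htb hdiv hmod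
    have hd2 : d = 0 ∨ d = 1 := by omega
    rcases hd2 with h | h
    · rw [h] at hmod
      rw [htb, h]
      simp only [Nat.zero_mod, decide_eq_true_eq, if_neg (by norm_num : ¬ (0:ℕ) = 1)]
      omega
    · rw [h] at hmod
      rw [htb, h]
      simp only [Nat.mod_self, decide_eq_true_eq]
      norm_num
      omega

theorem stmt_6 (n : ℕ) (hn : 2 ≤ n) (k : ℕ) (hk : 1 ≤ k) (hk2 : k ≤ 2 ^ (n - 1)) :
    2 ^ Nat.choose (n - 1) 2 * (k - 1) ≤ v n k ∧ v n k < 2 ^ Nat.choose (n - 1) 2 * k := by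
  obtain ⟨m, rfl⟩ : ∃ m, n = m + 1 := ⟨n - 1, by omega⟩
  obtain ⟨c, rfl⟩ : ∃ c, k = c + 1 := ⟨k - 1, by omega⟩
  simp only [Nat.add_sub_cancel] at *
  have hk1 : c < 2 ^ m := by omega
  have hj : 2 ^ m + (c + 1) - 1 = c + 2 ^ m := by omega
  have htb : (2 ^ m + (c + 1) - 1).testBit m = true := by
    rw [Nat.testBit_eq_decide_div_mod_eq]
    rw [hj]
    have h0 : (c + 2 ^ m) / 2 ^ m = 1 := by
      rw [Nat.add_div_right _ (by positivity), Nat.div_eq_of_lt hk1]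
    rw [h0]
    decide
  have hmod : (2 ^ m + (c + 1) - 1) % 2 ^ m = c := by
    rw [hj, Nat.add_mod_right, Nat.mod_eq_of_lt hk1]
  have hdec : decode (m + 1) (2 ^ m + (c + 1) - 1) = true :: decode m c := by
    rw [decode_succ, htb, ← decode_mod m (2 ^ m + (c + 1) - 1), hmod]
  have hlam : lam (true :: decode m c) = decode m c ++ lam (decode m c) := by
    simp [lam]
  have hlamlen : (lam (decode m c)).length = Nat.choose m 2 := by
    rw [length_lam, length_decode]
  have hv : v (m + 1) (c + 1) = c * 2 ^ Nat.choose m 2 + code (lam (decode m c)) := by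
    unfold v lambdaSharp
    simp only [Nat.add_sub_cancel]
    rw [hdec, hlam, code_append, code_decode m c hk1, hlamlen]
  have hcl : code (lam (decode m c)) < 2 ^ Nat.choose m 2 := by
    rw [← hlamlen]; exact code_lt _
  constructor
  · rw [hv, mul_comm]; exact Nat.le_add_right _ _
  · rw [hv, mul_add, mul_one, mul_comm]
    omega
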